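/- arXiv:2408.09515 — 2 statements merged into one kernel-verified Lean document; each statement's English description precedes it below -/
import Mathlib

section
/- For the bipartite pure state |ψ⟩ = (1/√(d^k)) Σ_{i⃗ ∈ 𝔽_d^k} |i⃗⟩ ⊗ |i⃗A⟩ on (ℂ^d)^⊗k ⊗ (ℂ^d)^⊗m, where A is a k×m matrix over 𝔽_d (d prime), the rank of the reduced density matrix on the second subsystem equals d^{rank(A)}. -/
noncomputable section
open Matrix

/-- The bipartite pure state (1/√(d^k)) Σ_{i⃗ ∈ 𝔽_d^k} |i⃗⟩ ⊗ |i⃗A⟩. -/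
def bipState (d k m : ℕ) [NeZero d] (A : Matrix (Fin k) (Fin m) (ZMod d)) :
    ((Fin k → ZMod d) × (Fin m → ZMod d)) → ℂ :=
  fun p => if p.2 = Matrix.vecMul p.1 A then ((Real.sqrt (d ^ k) : ℂ))⁻¹ else 0

/-- The reduced density matrix on the second subsystem. -/
def secondReducedDM (d k m : ℕ) [NeZero d] (A : Matrix (Fin k) (Fin m) (ZMod d)) :
    Matrix (Fin m → ZMod d) (Fin m → ZMod d) ℂ :=
  Matrix.of fun b b' => ∑ a : Fin k → ZMod d,
    bipState d k m A (a, b) * star (bipState d k m A (a, b'))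

/-- For the state (1/√(d^k)) Σ_{i⃗} |i⃗⟩⊗|i⃗A⟩ with d prime, the rank of the
reduced density matrix on the second subsystem equals d^{rank(A)}. -/
theorem reduced_rank_eq_d_pow_rank (d k m : ℕ) [Fact d.Prime] [NeZero d]
    (A : Matrix (Fin k) (Fin m) (ZMod d)) :
    (secondReducedDM d k m A).rank = d ^ A.rank := by
  classical
  set c : ℂ := ((Real.sqrt (d ^ k) : ℂ))⁻¹ with hc
  have hdk : (0:ℝ) ≤ (d:ℝ) ^ k := by positivity
  have hcc : c * c = ((d:ℂ) ^ k)⁻¹ := by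
    rw [hc, ← mul_inv, ← Complex.ofReal_mul, Real.mul_self_sqrt hdk]
    push_cast; ring
  have hcne : c * c ≠ 0 := by
    rw [hcc]
    refine inv_ne_zero ?_
    exact_mod_cast (pow_ne_zero k (Nat.cast_ne_zero.mpr (NeZero.ne d)) : ((d:ℂ))^k ≠ 0)
  have hdiag : secondReducedDM d k m A =
      Matrix.diagonal (fun b => (Fintype.card {a : Fin k → ZMod d // vecMul a A = b} : ℂ) * (c * c)) := by
    ext b b'
    simp only [secondReducedDM, bipState, Matrix.of_apply]
    by_cases hbb : b = b'
    · subst hbb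
      rw [Matrix.diagonal_apply_eq]
      rw [Fintype.card_subtype, ← Finset.sum_boole]
      rw [Finset.sum_mul]
      refine Finset.sum_congr rfl fun a _ => ?_
      by_cases h : vecMul a A = b
      · have hb : b = vecMul a A := h.symm
        rw [if_pos h, if_pos hb, one_mul, ← hc]
        congr 1
        rw [hc]
        simp
      · have hb : ¬ b = vecMul a A := fun hh => h hh.symm
        rw [if_neg h, if_neg hb, zero_mul, zero_mul]
    · rw [Matrix.diagonal_apply_ne _ hbb]
      refine Finset.sum_eq_zero fun a _ => ?_
      by_cases h : b = vecMul a A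
      · have hb' : ¬ b' = vecMul a A := fun hh => hbb (h.trans hh.symm)
        rw [if_pos h, if_neg hb', star_zero, mul_zero]
      · rw [if_neg h, zero_mul]
  rw [hdiag, Matrix.rank_diagonal]
  have hiff : ∀ b : Fin m → ZMod d,
      ((Fintype.card {a : Fin k → ZMod d // vecMul a A = b} : ℂ) * (c * c) ≠ 0)
        ↔ b ∈ LinearMap.range A.vecMulLinear := by
    intro b
    rw [mul_ne_zero_iff]
    constructor
    · rintro ⟨h1, -⟩
      have h2 : Fintype.card {a : Fin k → ZMod d // vecMul a A = b} ≠ 0 := by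
        exact_mod_cast h1
      obtain ⟨a, ha⟩ := Fintype.card_pos_iff.mp (Nat.pos_of_ne_zero h2)
      exact ⟨a, by simpa [Matrix.vecMulLinear_apply] using ha⟩
    · rintro ⟨a, ha⟩
      refine ⟨?_, hcne⟩
      have : Fintype.card {a : Fin k → ZMod d // vecMul a A = b} ≠ 0 := by
        have : Nonempty {a : Fin k → ZMod d // vecMul a A = b} :=
          ⟨a, by simpa [Matrix.vecMulLinear_apply] using ha⟩
        exact (Fintype.card_pos_iff.mpr this).ne'
      exact_mod_cast this
  have hcard : Fintype.card {b // (Fintype.card {a : Fin k → ZMod d // vecMul a A = b} : ℂ) * (c * c) ≠ 0}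
      = Fintype.card (LinearMap.range A.vecMulLinear) := by
    exact Fintype.card_congr (Equiv.subtypeEquivRight hiff)
  rw [hcard]
  rw [Module.card_eq_pow_finrank (K := ZMod d) (V := LinearMap.range A.vecMulLinear), ZMod.card]
  congr 1
  rw [← Matrix.rank_transpose A]
  rw [Matrix.rank, Matrix.mulVecLin_transpose]
end
end

section
/- Define O = (H†⊗I⊗H†) ∘ (CZ₁₂ · CZ₂₃) ∘ (H⊗H⊗H) on (ℂ^d)^⊗3, where CZ₁₂ and CZ₂₃ are controlled-Z gates on the indicated pairs. Then for all i₁,i₂,i₃ ∈ ℤ/dℤ, O|i₁,i₂,i₃⟩ = (X^{i₁} ⊗ Z^{i₂} ⊗ X^{i₃}) (1/√d) Σ_{l=0}^{d-1} |l,l,l⟩; i.e., the three-qudit linear-chain construction generates the GHZ basis. -/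
noncomputable section
open Matrix Kronecker

/-- ω = e^(2πi/d). -/
def omg (d : ℕ) : ℂ := Complex.exp (2 * Real.pi * Complex.I / d)

/-- Generalized Pauli X: X|i⟩ = |i+1 mod d⟩. -/
def Xmat (d : ℕ) [NeZero d] : Matrix (ZMod d) (ZMod d) ℂ :=
  Matrix.of fun i j => if i = j + 1 then 1 else 0

/-- Generalized Pauli Z: Z|i⟩ = ω^i |i⟩. -/
def Zmat (d : ℕ) [NeZero d] : Matrix (ZMod d) (ZMod d) ℂ :=
  Matrix.diagonal fun i => omg d ^ i.val

/-- Qudit Hadamard gate: entries H_{l,i} = ω^(il)/√d. -/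
def Hmat (d : ℕ) [NeZero d] : Matrix (ZMod d) (ZMod d) ℂ :=
  Matrix.of fun l i => omg d ^ (i.val * l.val) / (Real.sqrt d : ℂ)

/-- CZ on qudits 1,2 of three qudits. -/
def CZ12 (d : ℕ) [NeZero d] :
    Matrix (ZMod d × ZMod d × ZMod d) (ZMod d × ZMod d × ZMod d) ℂ :=
  Matrix.diagonal fun p => omg d ^ (p.1 * p.2.1).val

/-- CZ on qudits 2,3 of three qudits. -/
def CZ23 (d : ℕ) [NeZero d] :
    Matrix (ZMod d × ZMod d × ZMod d) (ZMod d × ZMod d × ZMod d) ℂ :=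
  Matrix.diagonal fun p => omg d ^ (p.2.1 * p.2.2).val

/-- O = (H†⊗I⊗H†) ∘ (CZ₁₂·CZ₂₃) ∘ (H⊗H⊗H). -/
def Oop3 (d : ℕ) [NeZero d] :
    Matrix (ZMod d × ZMod d × ZMod d) (ZMod d × ZMod d × ZMod d) ℂ :=
  ((Hmat d)ᴴ ⊗ₖ ((1 : Matrix (ZMod d) (ZMod d) ℂ) ⊗ₖ (Hmat d)ᴴ)) *
    (CZ12 d * CZ23 d) * (Hmat d ⊗ₖ (Hmat d ⊗ₖ Hmat d))

/-- The GHZ vector (1/√d) Σ_l |l,l,l⟩. -/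
def ghz (d : ℕ) [NeZero d] : (ZMod d × ZMod d × ZMod d) → ℂ :=
  fun p => if p.1 = p.2.1 ∧ p.2.1 = p.2.2 then ((Real.sqrt d : ℂ))⁻¹ else 0

lemma omg_prim (d : ℕ) [NeZero d] : IsPrimitiveRoot (omg d) d :=
  Complex.isPrimitiveRoot_exp d (NeZero.ne d)

lemma omg_pow_d (d : ℕ) [NeZero d] : omg d ^ d = 1 := (omg_prim d).pow_eq_one

lemma omg_pow_mod (d : ℕ) [NeZero d] (n : ℕ) : omg d ^ (n % d) = omg d ^ n := by
  conv_rhs => rw [← Nat.div_add_mod n d]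
  rw [pow_add, pow_mul, omg_pow_d, one_pow, one_mul]

/-- character -/
def chi (d : ℕ) [NeZero d] (a : ZMod d) : ℂ := omg d ^ a.val

lemma chi_add (d : ℕ) [NeZero d] (a b : ZMod d) : chi d (a + b) = chi d a * chi d b := by
  rw [chi, chi, chi, ZMod.val_add, omg_pow_mod, pow_add]

lemma chi_mul_val (d : ℕ) [NeZero d] (a b : ZMod d) : chi d (a * b) = omg d ^ (a.val * b.val) := by
  rw [chi, ZMod.val_mul, omg_pow_mod]

lemma omg_ne_zero (d : ℕ) : omg d ≠ 0 := Complex.exp_ne_zero _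

lemma chi_zero (d : ℕ) [NeZero d] : chi d 0 = 1 := by simp [chi]

lemma chi_ne_zero (d : ℕ) [NeZero d] (a : ZMod d) : chi d a ≠ 0 := pow_ne_zero _ (omg_ne_zero d)

lemma conj_chi (d : ℕ) [NeZero d] (a : ZMod d) :
    (starRingEnd ℂ) (chi d a) = chi d (-a) := by
  have h : chi d a * chi d (-a) = 1 := by rw [← chi_add]; simp [chi_zero]
  have hc : (starRingEnd ℂ) (omg d) = (omg d)⁻¹ := by
    rw [omg, ← Complex.exp_conj, ← Complex.exp_neg]
    congr 1
    rw [map_div₀]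
    simp [Complex.conj_I, Complex.conj_ofReal, map_ofNat]
    ring
  rw [chi, map_pow, hc, inv_pow, ← chi]
  exact (eq_inv_of_mul_eq_one_left (by rw [mul_comm]; exact h)).symm

lemma sum_chi' (d : ℕ) [NeZero d] (c : ZMod d) :
    ∑ q : ZMod d, chi d (q * c) = if c = 0 then (d : ℂ) else 0 := by
  split_ifs with hc
  · subst hc; simp [chi_zero, ZMod.card]
  · have key : ∀ q : ZMod d, chi d (q * c) = (omg d ^ c.val) ^ q.val := by
      intro q
      rw [chi_mul_val, mul_comm, pow_mul]
    simp only [key]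
    have conv : ∑ q : ZMod d, (omg d ^ c.val) ^ q.val
        = ∑ j ∈ Finset.range d, (omg d ^ c.val) ^ j := by
      refine Finset.sum_nbij' (fun q => q.val) (fun j => (j : ZMod d)) ?_ ?_ ?_ ?_ ?_ <;>
          simp [ZMod.val_lt, Finset.mem_range]
      intro a ha
      exact Nat.mod_eq_of_lt ha
    rw [conv, geom_sum_eq, ← pow_mul, mul_comm, pow_mul, omg_pow_d, one_pow]
    · simp
    · refine (omg_prim d).pow_ne_one_of_pos_of_lt ?_ (ZMod.val_lt c)
      exact fun (h0 : c.val = 0) => hc (ZMod.val_injective d (a₁ := c) (a₂ := 0) (by simp [h0]))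

lemma Xpow_apply (d : ℕ) [NeZero d] (n : ℕ) (a b : ZMod d) :
    (Xmat d ^ n) a b = if a = b + (n : ZMod d) then 1 else 0 := by
  induction n generalizing a b with
  | zero => simp [Matrix.one_apply, eq_comm]
  | succ n ih =>
    rw [pow_succ, Matrix.mul_apply]
    rw [Finset.sum_eq_single (b + 1)]
    · rw [ih, show Xmat d (b+1) b = 1 by simp [Xmat], mul_one]
      congr 1
      push_cast
      rw [add_assoc, add_comm 1 (n : ZMod d)]
    · intro c _ hne
      rw [show Xmat d c b = 0 by simp [Xmat, hne], mul_zero]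
    · simp

lemma Zpow_apply (d : ℕ) [NeZero d] (n : ℕ) (a b : ZMod d) :
    (Zmat d ^ n) a b = if a = b then omg d ^ (a.val * n) else 0 := by
  rw [Zmat, Matrix.diagonal_pow, Matrix.diagonal_apply]
  simp [pow_mul]

lemma rhs_eq (d : ℕ) [NeZero d] (i₁ i₂ i₃ : ZMod d) (p1 p2 p3 : ZMod d) :
    ((Xmat d ^ i₁.val) ⊗ₖ ((Zmat d ^ i₂.val) ⊗ₖ (Xmat d ^ i₃.val))).mulVec (ghz d) (p1, p2, p3)
    = if p1 = p2 + i₁ ∧ p3 = p2 + i₃ then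
        omg d ^ (p2.val * i₂.val) * ((Real.sqrt d : ℂ))⁻¹ else 0 := by
  simp only [Matrix.mulVec, dotProduct, Fintype.sum_prod_type,
    Matrix.kroneckerMap_apply, Xpow_apply, Zpow_apply, ghz, ZMod.natCast_zmod_val]
  simp only [ite_and, mul_ite, ite_mul, mul_zero, zero_mul, one_mul, mul_one]
  rw [Finset.sum_eq_single p2]
  · split_ifs <;> simp_all
  · intro c _ hne
    simp [Ne.symm hne]
  · simp

lemma lhs_eq (d : ℕ) [NeZero d] (i₁ i₂ i₃ p1 p2 p3 : ZMod d) :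
    Oop3 d (p1, p2, p3) (i₁, i₂, i₃) =
      if p1 = p2 + i₁ ∧ p3 = p2 + i₃ then
        omg d ^ (p2.val * i₂.val) * ((Real.sqrt d : ℂ))⁻¹ else 0 := by
  rw [Oop3, show CZ12 d * CZ23 d
      = Matrix.diagonal (fun p : ZMod d × ZMod d × ZMod d =>
          omg d ^ (p.1 * p.2.1).val * omg d ^ (p.2.1 * p.2.2).val) from
    Matrix.diagonal_mul_diagonal _ _]
  rw [Matrix.mul_apply]
  simp only [Matrix.mul_diagonal, Matrix.kroneckerMap_apply, Matrix.one_apply,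
    Matrix.conjTranspose_apply, Hmat, Matrix.of_apply]
  simp only [mul_ite, ite_mul, mul_zero, zero_mul, Fintype.sum_prod_type]
  simp only [Finset.sum_ite_irrel, Finset.sum_const_zero, Finset.sum_ite_eq, Finset.mem_univ,
    if_true]
  have hconv : ∀ a b : ZMod d, star (omg d ^ (a.val * b.val) / (Real.sqrt d : ℂ))
      = chi d (-(a * b)) * ((Real.sqrt d : ℂ))⁻¹ := by
    intro a b
    rw [← chi_mul_val, star_div₀, div_eq_mul_inv]
    congr 1
    · exact conj_chi d (a * b)
    · rw [Complex.star_def, Complex.conj_ofReal]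
  have hconv2 : ∀ a b : ZMod d, omg d ^ (a.val * b.val) / (Real.sqrt d : ℂ)
      = chi d (a * b) * ((Real.sqrt d : ℂ))⁻¹ := by
    intro a b
    rw [← chi_mul_val, div_eq_mul_inv]
  have key : ∀ x y : ZMod d,
      star (omg d ^ (p1.val * x.val) / (Real.sqrt d : ℂ)) *
          (1 * star (omg d ^ (p3.val * y.val) / (Real.sqrt d : ℂ))) *
          (omg d ^ (x * p2).val * omg d ^ (p2 * y).val) *
          (omg d ^ (i₁.val * x.val) / (Real.sqrt d : ℂ) *
            (omg d ^ (i₂.val * p2.val) / (Real.sqrt d : ℂ) *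
              (omg d ^ (i₃.val * y.val) / (Real.sqrt d : ℂ))))
        = (((Real.sqrt d : ℂ))⁻¹) ^ 5 *
            (chi d (p2 * i₂) * (chi d (x * (p2 + i₁ - p1)) * chi d (y * (p2 + i₃ - p3)))) := by
    intro x y
    rw [hconv, hconv, hconv2, hconv2, hconv2]
    have hchi : chi d (-(p1 * x)) * chi d (-(p3 * y)) * (chi d (x * p2) * chi d (p2 * y)) *
        (chi d (i₁ * x) * (chi d (i₂ * p2) * chi d (i₃ * y)))
        = chi d (p2 * i₂) * (chi d (x * (p2 + i₁ - p1)) * chi d (y * (p2 + i₃ - p3))) := by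
      simp only [← chi_add]
      congr 1
      ring
    show _ = _
    calc _ = (chi d (-(p1 * x)) * chi d (-(p3 * y)) * (chi d (x * p2) * chi d (p2 * y)) *
        (chi d (i₁ * x) * (chi d (i₂ * p2) * chi d (i₃ * y)))) * (((Real.sqrt d : ℂ))⁻¹) ^ 5 := by
          rw [show omg d ^ (x * p2).val = chi d (x * p2) from rfl,
            show omg d ^ (p2 * y).val = chi d (p2 * y) from rfl]
          ring
      _ = _ := by rw [hchi]; ring
  simp only [key]
  simp only [← Finset.mul_sum, ← Finset.sum_mul]
  rw [sum_chi', sum_chi']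
  have hd0 : (0:ℝ) < d := by exact_mod_cast Nat.pos_of_ne_zero (NeZero.ne d)
  have hs : ((Real.sqrt d : ℝ) : ℂ) ≠ 0 :=
    Complex.ofReal_ne_zero.mpr (ne_of_gt (Real.sqrt_pos.mpr hd0))
  have hd2 : ((Real.sqrt d : ℝ) : ℂ) ^ 2 = (d : ℂ) := by
    rw [← Complex.ofReal_pow, Real.sq_sqrt hd0.le]
    norm_cast
  have e1 : (p2 + i₁ - p1 = 0) ↔ (p1 = p2 + i₁) := by rw [sub_eq_zero, eq_comm]
  have e3 : (p2 + i₃ - p3 = 0) ↔ (p3 = p2 + i₃) := by rw [sub_eq_zero, eq_comm]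
  simp only [e1, e3, ← chi_mul_val]
  by_cases h1 : p1 = p2 + i₁ <;> by_cases h3 : p3 = p2 + i₃
  · rw [if_pos h1, if_pos h3, if_pos ⟨h1, h3⟩]
    field_simp
    linear_combination -chi d (p2 * i₂) * ((d:ℂ) + ((Real.sqrt d : ℝ):ℂ)^2) * hd2
  · simp [h1, h3]
  · simp [h1, h3]
  · simp [h1, h3]

/-- The three-qudit linear-chain construction generates the GHZ basis:
O|i₁,i₂,i₃⟩ = (X^{i₁} ⊗ Z^{i₂} ⊗ X^{i₃}) (1/√d) Σ_l |l,l,l⟩. -/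
theorem Oop3_ghz_basis (d : ℕ) [NeZero d] (i₁ i₂ i₃ : ZMod d) :
    (Oop3 d).mulVec (Pi.single (i₁, i₂, i₃) 1)
      = ((Xmat d ^ i₁.val) ⊗ₖ ((Zmat d ^ i₂.val) ⊗ₖ (Xmat d ^ i₃.val))).mulVec (ghz d) := by
  funext p
  obtain ⟨p1, p2, p3⟩ := p
  rw [Matrix.mulVec_single]
  show Oop3 d (p1, p2, p3) (i₁, i₂, i₃) * 1 = _
  rw [mul_one, lhs_eq, rhs_eq]
end
end
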